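/- Let n ≥ 1 and let λ : Fin n → ℝ be the eigenvalues of the diffusion operator of an ergodic Markov chain, i.e. |λ 0| = 1 and |λ i| < 1 for all i ≠ 0. Then the diffusion spectral entropy tends to 0 as diffusion time tends to infinity: lim_{t → ∞} S(λ, t) = 0. -/

import Mathlib

open Real Filter

/-- Diffusion spectral entropy of an eigenvalue list `lam` at diffusion time `t`:
`S(λ, t) = -∑ i, α_{i,t} log α_{i,t}` where `α_{i,t} = |λ_i|^t / ∑_j |λ_j|^t`. -/
noncomputable def diffusionSpectralEntropy {ι : Type*} [Fintype ι] (lam : ι → ℝ) (t : ℝ) : ℝ :=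
  -∑ i, (|lam i| ^ t / ∑ j, |lam j| ^ t) * Real.log (|lam i| ^ t / ∑ j, |lam j| ^ t)

/-- For the eigenvalues of an ergodic Markov chain (one eigenvalue of modulus 1, all others of
modulus strictly less than 1), the diffusion spectral entropy tends to 0 as `t → ∞`. -/
theorem dse_tendsto_zero_of_ergodic {n : ℕ} (hn : 1 ≤ n) (lam : Fin n → ℝ)
    (h0 : |lam ⟨0, hn⟩| = 1) (h1 : ∀ i : Fin n, i ≠ ⟨0, hn⟩ → |lam i| < 1) :
    Tendsto (fun t : ℝ => diffusionSpectralEntropy lam t) atTop (nhds 0) := by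
  have hterm : ∀ j : Fin n, Tendsto (fun t : ℝ => |lam j| ^ t) atTop
      (nhds (if j = ⟨0, hn⟩ then 1 else 0)) := by
    intro j
    by_cases hj : j = ⟨0, hn⟩
    · simp only [hj, h0, Real.one_rpow, if_pos rfl]
      exact tendsto_const_nhds
    · simp only [if_neg hj]
      exact tendsto_rpow_atTop_of_base_lt_one _
        (by linarith [abs_nonneg (lam j)]) (h1 j hj)
  have hS : Tendsto (fun t : ℝ => ∑ j, |lam j| ^ t) atTop (nhds 1) := by
    have := tendsto_finset_sum Finset.univ (fun j _ => hterm j)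
    simpa [Finset.sum_ite_eq'] using this
  have hα : ∀ i : Fin n, Tendsto (fun t : ℝ => |lam i| ^ t / ∑ j, |lam j| ^ t) atTop
      (nhds (if i = ⟨0, hn⟩ then 1 else 0)) := by
    intro i
    have := (hterm i).div hS one_ne_zero
    rw [div_one] at this
    exact this
  have key : ∀ i : Fin n, Tendsto
      (fun t : ℝ => Real.negMulLog (|lam i| ^ t / ∑ j, |lam j| ^ t)) atTop (nhds 0) := by
    intro i
    have h := (Real.continuous_negMulLog.tendsto _).comp (hα i)
    by_cases hi : i = ⟨0, hn⟩ <;> simpa [hi, Function.comp_def] using h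
  have heq : ∀ t : ℝ, diffusionSpectralEntropy lam t
      = ∑ i, Real.negMulLog (|lam i| ^ t / ∑ j, |lam j| ^ t) := by
    intro t
    simp [diffusionSpectralEntropy, Real.negMulLog, neg_mul, ← Finset.sum_neg_distrib]
  have := tendsto_finset_sum Finset.univ (fun i _ => key i)
  simp only [Finset.sum_const_zero] at this
  simpa [heq] using this
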